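/- arXiv:2207.14805 — 8 statements merged into one kernel-verified Lean document; each statement's English description precedes it below -/
import Mathlib

section
/- Let (T,r) be a metric tree (a metric space satisfying the four-point condition and admitting branch points) with branch point map c_{(T,r)}. Then c_{(T,r)} is symmetric and satisfies the axioms of an algebraic tree: (2pc) c(x,y,y)=y, (3pc) c(x,y,c(x,y,z))=c(x,y,z), and (4pc) c(x1,x2,x3) ∈ {c(x1,x2,x4), c(x1,x3,x4), c(x2,x3,x4)}. -/
/-- The branch point map of a metric tree satisfies the axioms of an algebraic
tree: symmetry, (2pc), (3pc) and (4pc). -/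
theorem metric_tree_branch_point_map_is_algebraic_tree {T : Type*} [MetricSpace T]
    (h4pt : ∀ x1 x2 x3 x4 : T,
      dist x1 x2 + dist x3 x4 ≤ max (dist x1 x3 + dist x2 x4) (dist x1 x4 + dist x2 x3))
    (c : T → T → T → T)
    (hbp : ∀ x1 x2 x3 : T,
      dist x1 (c x1 x2 x3) + dist (c x1 x2 x3) x2 = dist x1 x2 ∧
      dist x1 (c x1 x2 x3) + dist (c x1 x2 x3) x3 = dist x1 x3 ∧
      dist x2 (c x1 x2 x3) + dist (c x1 x2 x3) x3 = dist x2 x3) :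
    (∀ x y z : T, c x y z = c y x z ∧ c x y z = c x z y) ∧
    (∀ x y : T, c x y y = y) ∧
    (∀ x y z : T, c x y (c x y z) = c x y z) ∧
    (∀ x1 x2 x3 x4 : T,
      c x1 x2 x3 = c x1 x2 x4 ∨ c x1 x2 x3 = c x1 x3 x4 ∨ c x1 x2 x3 = c x2 x3 x4) := by
  -- distance from x to the branch point is the Gromov product
  have hd : ∀ x y z : T,
      2 * dist x (c x y z) = dist x y + dist x z - dist y z := by
    intro x y z
    obtain ⟨h1, h2, h3⟩ := hbp x y z
    linarith [dist_comm y (c x y z)]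
  -- uniqueness of branch points
  have uniq : ∀ x y z p : T,
      dist x p + dist p y = dist x y →
      dist x p + dist p z = dist x z →
      dist y p + dist p z = dist y z → p = c x y z := by
    intro x y z p h1 h2 h3
    obtain ⟨g1, g2, g3⟩ := hbp x y z
    set q := c x y z with hq
    have hxp : 2 * dist x p = dist x y + dist x z - dist y z := by
      linarith [dist_comm y p]
    have hxq : 2 * dist x q = dist x y + dist x z - dist y z := hd x y z
    have h4 := h4pt x y p q
    have hM : max (dist x p + dist y q) (dist x q + dist y p) ≤ dist x y := by
      apply max_le
      · linarith [dist_comm y q]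
      · linarith [dist_comm y p]
    have hpq : dist p q ≤ 0 := by linarith
    exact dist_le_zero.mp hpq
  -- key lemma: if (y·z)_x = (y·u)_x then c x y u = c x y z
  have key : ∀ x y z u : T,
      dist x z - dist y z = dist x u - dist y u → c x y u = c x y z := by
    intro x y z u hA
    obtain ⟨g1, g2, g3⟩ := hbp x y u
    set q := c x y u with hq
    have hB : 2 * dist x q = dist x y + dist x u - dist y u := hd x y u
    have h4 := h4pt q z x y
    have harg : dist q x + dist z y = dist q y + dist z x := by
      linarith [dist_comm q x, dist_comm z y, dist_comm z x]
    rw [harg, max_self] at h4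
    have hub : dist q z ≤ dist x z - dist x q := by
      linarith [dist_comm z x]
    have hlb : dist x z ≤ dist x q + dist q z := dist_triangle x q z
    refine uniq x y z q g1 (by linarith) ?_
    linarith [dist_comm y q]
  -- symmetry
  have sym : ∀ x y z : T, c x y z = c y x z ∧ c x y z = c x z y := by
    intro x y z
    constructor
    · obtain ⟨g1, g2, g3⟩ := hbp y x z
      exact (uniq x y z (c y x z)
        (by linarith [dist_comm x (c y x z), dist_comm y (c y x z),
          dist_comm x y])
        (by linarith [dist_comm x (c y x z)])
        (by linarith [dist_comm y (c y x z)])).symm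
    · obtain ⟨g1, g2, g3⟩ := hbp x z y
      exact (uniq x y z (c x z y) g2 g1
        (by linarith [dist_comm y (c x z y), dist_comm z (c x z y),
          dist_comm y z])).symm
  have h2pc : ∀ x y : T, c x y y = y := by
    intro x y
    exact (uniq x y y y (by simp) (by simp) (by simp)).symm
  have h3pc : ∀ x y z : T, c x y (c x y z) = c x y z := by
    intro x y z
    obtain ⟨g1, g2, g3⟩ := hbp x y z
    exact (uniq x y (c x y z) (c x y z) g1 (by simp) (by simp)).symm
  refine ⟨sym, h2pc, h3pc, ?_⟩
  intro x1 x2 x3 x4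
  -- two of the three pair sums are equal
  set S1 := dist x1 x2 + dist x3 x4 with hS1
  set S2 := dist x1 x3 + dist x2 x4 with hS2
  set S3 := dist x1 x4 + dist x2 x3 with hS3
  have h1 : S1 ≤ S2 ∨ S1 ≤ S3 := le_max_iff.mp (h4pt x1 x2 x3 x4)
  have h2 : S2 ≤ S1 ∨ S2 ≤ S3 := by
    have := h4pt x1 x3 x2 x4
    rw [dist_comm x3 x2] at this
    exact le_max_iff.mp (by simpa [hS1, hS2, hS3] using this)
  have h3 : S3 ≤ S1 ∨ S3 ≤ S2 := by
    have := h4pt x1 x4 x2 x3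
    rw [dist_comm x4 x2, dist_comm x4 x3] at this
    
    exact le_max_iff.mp (by simpa [hS1, hS2, hS3] using this)
  have hcase : S2 = S3 ∨ S1 = S2 ∨ S1 = S3 := by
    rcases h1 with h1 | h1 <;> rcases h2 with h2 | h2 <;> rcases h3 with h3 | h3
    · exact Or.inr (Or.inl (le_antisymm h1 h2))
    · exact Or.inr (Or.inl (le_antisymm h1 h2))
    · exact Or.inr (Or.inl (le_antisymm h1 (by linarith)))
    · exact Or.inl (le_antisymm h2 h3)
    · exact Or.inr (Or.inr (le_antisymm h1 h3))
    · exact Or.inr (Or.inr (le_antisymm h1 (by linarith)))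
    · exact Or.inr (Or.inr (le_antisymm h1 h3))
    · exact Or.inl (le_antisymm (by linarith) h3)
  rcases hcase with hc | hc | hc
  · -- S2 = S3 : c x1 x2 x3 = c x1 x2 x4
    left
    have := key x1 x2 x3 x4 (by
      simp only [hS2, hS3] at hc; linarith)
    exact this.symm
  · -- S1 = S2 : c x1 x2 x3 = c x2 x3 x4
    right; right
    have hk := key x2 x3 x1 x4 (by
      simp only [hS1, hS2] at hc
      have c1 := dist_comm x1 x2
      have c2 := dist_comm x1 x3
      linarith)
    -- hk : c x2 x3 x4 = c x2 x3 x1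
    have e1 : c x1 x2 x3 = c x2 x1 x3 := (sym x1 x2 x3).1
    have e2 : c x2 x1 x3 = c x2 x3 x1 := (sym x2 x1 x3).2
    rw [e1, e2, ← hk]
  · -- S1 = S3 : c x1 x2 x3 = c x1 x3 x4
    right; left
    have hk := key x1 x3 x2 x4 (by
      simp only [hS1, hS3] at hc
      have c1 := dist_comm x2 x3
      have c2 := dist_comm x3 x4
      linarith)
    -- hk : c x1 x3 x4 = c x1 x3 x2
    have e1 : c x1 x2 x3 = c x1 x3 x2 := (sym x1 x2 x3).2
    rw [e1, ← hk]
end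

section
/- Let (T,c) be an algebraic tree and x ∈ T. Define, for y,z ∈ T∖{x}, y ∼_x z iff c(x,y,z) ≠ x. Then ∼_x is an equivalence relation on T∖{x}. -/
/-- In an algebraic tree `(T,c)`, for each `x`, the relation
`y ∼_x z ↔ c x y z ≠ x` is an equivalence relation on `T \ {x}`. -/
theorem component_relation_is_equivalence {T : Type*} (c : T → T → T → T)
    (hsym : ∀ x y z : T, c x y z = c y x z ∧ c x y z = c x z y)
    (h2pc : ∀ x y : T, c x y y = y)
    (h3pc : ∀ x y z : T, c x y (c x y z) = c x y z)
    (h4pc : ∀ x1 x2 x3 x4 : T,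
      c x1 x2 x3 = c x1 x2 x4 ∨ c x1 x2 x3 = c x1 x3 x4 ∨ c x1 x2 x3 = c x2 x3 x4)
    (x : T) :
    (∀ y : T, y ≠ x → c x y y ≠ x) ∧
    (∀ y z : T, y ≠ x → z ≠ x → c x y z ≠ x → c x z y ≠ x) ∧
    (∀ y z w : T, y ≠ x → z ≠ x → w ≠ x → c x y z ≠ x → c x z w ≠ x → c x y w ≠ x) := by
  refine ⟨fun y hy => by rw [h2pc]; exact hy,
    fun y z _ _ hyz => by rw [← (hsym x y z).2]; exact hyz, ?_⟩
  intro y z w hy hz hw hyz hzw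
  intro h
  rcases h4pc x y w z with h1 | h2 | h3
  · exact hyz (h1 ▸ h)
  · apply hzw
    rw [(hsym x z w).2, ← h2, h]
  · -- c y w z = x, hence c y z w = x, so c y z x = x, i.e. c x y z = x
    have hywz : c y w z = x := h3 ▸ h
    have hyzw : c y z w = x := ((hsym y z w).2).trans hywz
    have := h3pc y z w
    rw [hyzw] at this
    apply hyz
    rw [(hsym x y z).1, (hsym y x z).2]
    exact this
end

section
/- Let (T,c) and (T̂,ĉ) be algebraic trees and f : T → T̂. Then f is a tree homomorphism, i.e., f(c(x,y,z)) = ĉ(f(x),f(y),f(z)) for all x,y,z, if and only if f([x,y]) ⊆ [f(x),f(y)] for all x,y ∈ T, where [x,y] := {z : c(x,y,z)=z}. -/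
/-- Uniqueness: a point in all three intervals equals the median. -/
lemma tree_median_uniq {T : Type*} (c : T → T → T → T)
    (h4pc : ∀ x1 x2 x3 x4 : T,
      c x1 x2 x3 = c x1 x2 x4 ∨ c x1 x2 x3 = c x1 x3 x4 ∨ c x1 x2 x3 = c x2 x3 x4)
    {x y z w : T} (h1 : c x y w = w) (h2 : c x z w = w) (h3 : c y z w = w) :
    c x y z = w := by
  rcases h4pc x y z w with h | h | h <;> rw [h] <;> assumption

/-- The median lies in the interval [x,z]. -/
lemma tree_median_mem {T : Type*} (c : T → T → T → T)
    (hsym : ∀ x y z : T, c x y z = c y x z ∧ c x y z = c x z y)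
    (h3pc : ∀ x y z : T, c x y (c x y z) = c x y z)
    (h4pc : ∀ x1 x2 x3 x4 : T,
      c x1 x2 x3 = c x1 x2 x4 ∨ c x1 x2 x3 = c x1 x3 x4 ∨ c x1 x2 x3 = c x2 x3 x4)
    (x y z : T) : c x z (c x y z) = c x y z := by
  have s1 : ∀ a b d : T, c a b d = c b a d := fun a b d => (hsym a b d).1
  have s2 : ∀ a b d : T, c a b d = c a d b := fun a b d => (hsym a b d).2
  set m := c x y z with hm
  have hxym : c x y m = m := h3pc x y z
  have e0 : c x z m = c z m x := ((s2 z m x).trans (s1 z x m)).symm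
  rcases h4pc z m x y with h | h | h
  · -- c z m x = c z m y, i.e. c x z m = c y z m =: p
    have hp : c x z m = c y z m :=
      (e0.trans h).trans ((s2 z m y).trans (s1 z y m))
    set p := c x z m with hpdef
    have hxzp : c x z p = p := h3pc x z m
    have hyzp : c y z p = p := by rw [hp]; exact h3pc y z m
    rcases h4pc x y p z with h' | h' | h'
    · -- c x y p = c x y z = m
      have hxyp : c x y p = m := h'
      have e1 : c x p m = m := by
        have hh : m = c x p y := by rw [← hxyp, s2 x y p]
        rw [hh]; exact h3pc x p y
      have e2 : c x m p = p := by
        have hh : p = c x m z := by rw [hpdef, s2 x z m]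
        rw [hh]; exact h3pc x m z
      have : m = p := by rw [← e1, s2 x p m, e2]
      exact this.symm
    · -- c x y p = c x p z = p
      have hxyp : c x y p = p := by rw [h', s2 x p z]; exact hxzp
      exact (tree_median_uniq c h4pc hxyp hxzp hyzp).symm
    · have hxyp : c x y p = p := by rw [h', s2 y p z]; exact hyzp
      exact (tree_median_uniq c h4pc hxyp hxzp hyzp).symm
  · -- c z m x = c z x y
    exact (e0.trans h).trans ((s1 z x y).trans (s2 x z y))
  · -- c z m x = c m x y
    exact (e0.trans h).trans (((s1 m x y).trans (s2 x m y)).trans hxym)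

/-- A map between algebraic trees is a tree homomorphism if and only if it maps
intervals into intervals. -/
theorem tree_homomorphism_iff_interval_preserving {T T' : Type*}
    (c : T → T → T → T) (c' : T' → T' → T' → T')
    (hsym : ∀ x y z : T, c x y z = c y x z ∧ c x y z = c x z y)
    (h2pc : ∀ x y : T, c x y y = y)
    (h3pc : ∀ x y z : T, c x y (c x y z) = c x y z)
    (h4pc : ∀ x1 x2 x3 x4 : T,
      c x1 x2 x3 = c x1 x2 x4 ∨ c x1 x2 x3 = c x1 x3 x4 ∨ c x1 x2 x3 = c x2 x3 x4)
    (hsym' : ∀ x y z : T', c' x y z = c' y x z ∧ c' x y z = c' x z y)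
    (h2pc' : ∀ x y : T', c' x y y = y)
    (h3pc' : ∀ x y z : T', c' x y (c' x y z) = c' x y z)
    (h4pc' : ∀ x1 x2 x3 x4 : T',
      c' x1 x2 x3 = c' x1 x2 x4 ∨ c' x1 x2 x3 = c' x1 x3 x4 ∨ c' x1 x2 x3 = c' x2 x3 x4)
    (f : T → T') :
    (∀ x y z : T, f (c x y z) = c' (f x) (f y) (f z)) ↔
      (∀ x y : T, f '' {z : T | c x y z = z} ⊆ {z : T' | c' (f x) (f y) z = z}) := by
  constructor
  · rintro h x y _ ⟨z, hz, rfl⟩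
    show c' (f x) (f y) (f z) = f z
    rw [← h]
    exact congrArg f hz
  · intro hInt x y z
    set m := c x y z with hm
    have hxy : c' (f x) (f y) (f m) = f m :=
      hInt x y ⟨m, h3pc x y z, rfl⟩
    have hxz : c' (f x) (f z) (f m) = f m :=
      hInt x z ⟨m, tree_median_mem c hsym h3pc h4pc x y z, rfl⟩
    have hyz : c' (f y) (f z) (f m) = f m := by
      refine hInt y z ⟨m, ?_, rfl⟩
      have h1 := tree_median_mem c hsym h3pc h4pc y x z
      rwa [← (hsym x y z).1, ← hm] at h1
    exact (tree_median_uniq c' h4pc' hxy hxz hyz).symm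
end

section
/- Let (T,c) be an algebraic tree, ξ a Borel measure on T (with respect to the component topology) that is finite on every interval [x,y]. Then r_ξ(x,y) := ξ([x,y]) − ½ξ({x}) − ½ξ({y}) defines a pseudometric on T. -/
open MeasureTheory

/-- For a Borel measure `ξ` on an algebraic tree (with the component topology)
that is finite on intervals, `r_ξ(x,y) = ξ([x,y]) - ξ({x})/2 - ξ({y})/2`
defines a pseudometric. -/
theorem rxi_is_pseudometric {T : Type*} (c : T → T → T → T)
    (hsym : ∀ x y z : T, c x y z = c y x z ∧ c x y z = c x z y)
    (h2pc : ∀ x y : T, c x y y = y)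
    (h3pc : ∀ x y z : T, c x y (c x y z) = c x y z)
    (h4pc : ∀ x1 x2 x3 x4 : T,
      c x1 x2 x3 = c x1 x2 x4 ∨ c x1 x2 x3 = c x1 x3 x4 ∨ c x1 x2 x3 = c x2 x3 x4)
    [m : MeasurableSpace T]
    (hm : m = @borel T (TopologicalSpace.generateFrom
      {S : Set T | ∃ x y : T, x ≠ y ∧ S = {z : T | z ≠ x ∧ c x z y ≠ x}}))
    (ξ : Measure T)
    (hfin : ∀ x y : T, ξ {z : T | c x y z = z} < ⊤) :
    (∀ x : T, (ξ {z : T | c x x z = z}).toReal - (ξ {x}).toReal / 2 - (ξ {x}).toReal / 2 = 0) ∧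
    (∀ x y : T,
      (ξ {z : T | c x y z = z}).toReal - (ξ {x}).toReal / 2 - (ξ {y}).toReal / 2 =
      (ξ {z : T | c y x z = z}).toReal - (ξ {y}).toReal / 2 - (ξ {x}).toReal / 2) ∧
    (∀ x y z : T,
      (ξ {w : T | c x z w = w}).toReal - (ξ {x}).toReal / 2 - (ξ {z}).toReal / 2 ≤
      ((ξ {w : T | c x y w = w}).toReal - (ξ {x}).toReal / 2 - (ξ {y}).toReal / 2) +
      ((ξ {w : T | c y z w = w}).toReal - (ξ {y}).toReal / 2 - (ξ {z}).toReal / 2)) := by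
  -- c x x z = x
  have hxx : ∀ x z : T, c x x z = x := fun x z => by
    rw [(hsym x x z).2, (hsym x z x).1, h2pc]
  -- [x,x] = {x}
  have hset : ∀ x : T, {z : T | c x x z = z} = {x} := by
    intro x
    ext z
    simp only [Set.mem_setOf_eq, Set.mem_singleton_iff]
    constructor
    · intro h; rw [← h, hxx]
    · rintro rfl; exact hxx z z
  -- singletons are measurable
  have hsing : ∀ y : T, MeasurableSet {y} := by
    letI τ : TopologicalSpace T := TopologicalSpace.generateFrom
      {S : Set T | ∃ x y : T, x ≠ y ∧ S = {z : T | z ≠ x ∧ c x z y ≠ x}}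
    intro y
    rw [hm]
    have hopen : IsOpen ({y}ᶜ : Set T) := by
      have heq : ({y}ᶜ : Set T) = ⋃ w ∈ ({y}ᶜ : Set T), {z : T | z ≠ y ∧ c y z w ≠ y} := by
        ext v
        simp only [Set.mem_compl_iff, Set.mem_singleton_iff, Set.mem_iUnion, Set.mem_setOf_eq]
        constructor
        · intro hv
          exact ⟨v, hv, hv, by rw [h2pc]; exact hv⟩
        · rintro ⟨w, _, hv, _⟩; exact hv
      rw [heq]
      refine isOpen_biUnion fun w hw => ?_
      exact TopologicalSpace.isOpen_generateFrom_of_mem ⟨y, w, fun h => hw h.symm, rfl⟩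
    have h1 : MeasurableSet[borel T] ({y}ᶜ) :=
      MeasurableSpace.measurableSet_generateFrom hopen
    simpa using h1.compl
  -- finiteness of singleton measures
  have hsfin : ∀ x : T, ξ {x} < ⊤ := fun x => hset x ▸ hfin x x
  refine ⟨?_, ?_, ?_⟩
  · intro x
    rw [hset x]
    ring
  · intro x y
    have : {z : T | c x y z = z} = {z : T | c y x z = z} := by
      ext z; simp only [Set.mem_setOf_eq, (hsym x y z).1]
    rw [this]; ring
  · intro x y z
    -- interval inclusion
    have hsub : {w : T | c x z w = w} ⊆ {w : T | c x y w = w} ∪ {w : T | c y z w = w} := by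
      intro w hw
      simp only [Set.mem_setOf_eq] at hw
      rcases h4pc x z w y with h | h | h
      · left
        have hw' : w = c x y z := by
          rw [hw] at h; rw [h, (hsym x z y).2]
        show c x y w = w
        rw [hw', h3pc]
      · left
        show c x y w = w
        rw [(hsym x y w).2, ← h, hw]
      · right
        show c y z w = w
        rw [(hsym y z w).1, (hsym z y w).2, ← h, hw]
    -- y belongs to both intervals
    have hyA : y ∈ {w : T | c x y w = w} := by simp only [Set.mem_setOf_eq, h2pc]
    have hyB : y ∈ {w : T | c y z w = w} := by
      show c y z y = y
      rw [(hsym y z y).2, hxx]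
    set A := {w : T | c x y w = w}
    set B := {w : T | c y z w = w}
    have key : ξ {w : T | c x z w = w} + ξ {y} ≤ ξ A + ξ B := by
      have h1 : ξ (A ∩ {y}) + ξ (A \ {y}) = ξ A := measure_inter_add_diff A (hsing y)
      have h2 : A ∩ {y} = {y} := by
        apply Set.inter_eq_self_of_subset_right
        simpa using hyA
      rw [h2] at h1
      have h3 : {w : T | c x z w = w} ⊆ (A \ {y}) ∪ B := by
        intro w hw
        rcases hsub hw with h | h
        · by_cases hwy : w = y
          · right; rw [hwy]; exact hyB
          · left; exact ⟨h, hwy⟩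
        · right; exact h
      calc ξ {w : T | c x z w = w} + ξ {y}
          ≤ ξ ((A \ {y}) ∪ B) + ξ {y} := add_le_add_left (measure_mono h3) _
        _ ≤ (ξ (A \ {y}) + ξ B) + ξ {y} := add_le_add_left (measure_union_le _ _) _
        _ = (ξ {y} + ξ (A \ {y})) + ξ B := by ring
        _ = ξ A + ξ B := by rw [h1]
    -- pass to reals
    have hA : ξ A ≠ ⊤ := (hfin x y).ne
    have hB : ξ B ≠ ⊤ := (hfin y z).ne
    have hAC : ξ {w : T | c x z w = w} ≠ ⊤ := (hfin x z).ne
    have hy : ξ {y} ≠ ⊤ := (hsfin y).ne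
    have keyR : (ξ {w : T | c x z w = w}).toReal + (ξ {y}).toReal ≤
        (ξ A).toReal + (ξ B).toReal := by
      rw [← ENNReal.toReal_add hAC hy, ← ENNReal.toReal_add hA hB]
      exact ENNReal.toReal_mono (by simp [hA, hB]) key
    linarith
end

section
/- Let (T,c) be an algebraic tree and ρ ∈ T. Define c_∧(x,y) := c(x,y,ρ). Then (T, c_∧) is a rooted algebraic tree with root ρ: c_∧ is symmetric, satisfies (M1) c_∧(x,x)=x, (M2) c_∧(x, c_∧(y,z)) = c_∧(c_∧(x,y), z), (M3), and c_∧(ρ,x)=ρ for all x ∈ T. -/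
namespace AlgTreeAux

variable {T : Type*}

lemma p213 (c : T → T → T → T)
    (hsym : ∀ x y z : T, c x y z = c y x z ∧ c x y z = c x z y)
    (x y z : T) : c x y z = c y x z := (hsym x y z).1

lemma p132 (c : T → T → T → T)
    (hsym : ∀ x y z : T, c x y z = c y x z ∧ c x y z = c x z y)
    (x y z : T) : c x y z = c x z y := (hsym x y z).2

lemma p231 (c : T → T → T → T)
    (hsym : ∀ x y z : T, c x y z = c y x z ∧ c x y z = c x z y)
    (x y z : T) : c x y z = c y z x := by
  rw [p213 c hsym, p132 c hsym]

lemma p312 (c : T → T → T → T)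
    (hsym : ∀ x y z : T, c x y z = c y x z ∧ c x y z = c x z y)
    (x y z : T) : c x y z = c z x y := by
  rw [p132 c hsym, p213 c hsym]

lemma m1 (c : T → T → T → T)
    (hsym : ∀ x y z : T, c x y z = c y x z ∧ c x y z = c x z y)
    (h2pc : ∀ x y : T, c x y y = y)
    (ρ x : T) : c x x ρ = x := by
  rw [p312 c hsym]; exact h2pc ρ x

lemma labs (c : T → T → T → T)
    (hsym : ∀ x y z : T, c x y z = c y x z ∧ c x y z = c x z y)
    (h3pc : ∀ x y z : T, c x y (c x y z) = c x y z)
    (ρ x y : T) : c x (c x y ρ) ρ = c x y ρ := by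
  have h : c x ρ (c x ρ y) = c x ρ y := h3pc x ρ y
  calc c x (c x y ρ) ρ = c x ρ (c x y ρ) := p132 c hsym ..
    _ = c x ρ (c x ρ y) := by rw [p132 c hsym x y ρ]
    _ = c x ρ y := h
    _ = c x y ρ := by rw [p132 c hsym]

lemma lle_left (c : T → T → T → T)
    (hsym : ∀ x y z : T, c x y z = c y x z ∧ c x y z = c x z y)
    (h3pc : ∀ x y z : T, c x y (c x y z) = c x y z)
    (ρ x y : T) : c (c x y ρ) x ρ = c x y ρ := by
  rw [p213 c hsym]; exact labs c hsym h3pc ρ x y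

lemma lle_right (c : T → T → T → T)
    (hsym : ∀ x y z : T, c x y z = c y x z ∧ c x y z = c x z y)
    (h3pc : ∀ x y z : T, c x y (c x y z) = c x y z)
    (ρ x y : T) : c (c x y ρ) y ρ = c x y ρ := by
  rw [p213 c hsym x y ρ]
  exact lle_left c hsym h3pc ρ y x

lemma ltrans (c : T → T → T → T)
    (hsym : ∀ x y z : T, c x y z = c y x z ∧ c x y z = c x z y)
    (h3pc : ∀ x y z : T, c x y (c x y z) = c x y z)
    (h4pc : ∀ x1 x2 x3 x4 : T,
      c x1 x2 x3 = c x1 x2 x4 ∨ c x1 x2 x3 = c x1 x3 x4 ∨ c x1 x2 x3 = c x2 x3 x4)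
    (ρ : T) {x y z : T} (hxy : c x y ρ = x) (hyz : c y z ρ = y) :
    c x z ρ = x := by
  rcases h4pc x y ρ z with h | h | h
  · -- x = c x y z
    rw [hxy] at h
    rcases h4pc x z ρ y with h2 | h2 | h2
    · rw [h2, p132 c hsym, ← h]
    · rw [h2, p132 c hsym, hxy]
    · have hzy : c x z ρ = y := by
        rw [h2, p312 c hsym, hyz]
      have hb : c x ρ (c x z ρ) = c x z ρ := by
        rw [p132 c hsym x z ρ]; exact h3pc x ρ z
      rw [hzy] at hb
      rw [p132 c hsym, hb] at hxy
      rw [hzy, ← hxy]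
  · rw [hxy] at h
    rw [p132 c hsym] at h
    exact h.symm
  · rw [hxy] at h
    rw [p132 c hsym, hyz] at h
    rw [h, hyz]

lemma llb (c : T → T → T → T)
    (hsym : ∀ x y z : T, c x y z = c y x z ∧ c x y z = c x z y)
    (h2pc : ∀ x y : T, c x y y = y)
    (h3pc : ∀ x y z : T, c x y (c x y z) = c x y z)
    (h4pc : ∀ x1 x2 x3 x4 : T,
      c x1 x2 x3 = c x1 x2 x4 ∨ c x1 x2 x3 = c x1 x3 x4 ∨ c x1 x2 x3 = c x2 x3 x4)
    (ρ : T) {w x y : T} (hwx : c w x ρ = w) (hwy : c w y ρ = w) :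
    c w (c x y ρ) ρ = w := by
  set u := c x y ρ with hu
  have hux : c u x ρ = u := lle_left c hsym h3pc ρ x y
  have hd : u = c x y w ∨ u = w := by
    rcases h4pc x y ρ w with h | h | h
    · exact Or.inl h
    · right
      rw [hu, h, p132 c hsym, p213 c hsym, hwx]
    · right
      rw [hu, h, p132 c hsym, p213 c hsym, hwy]
  rcases hd with hd | hd
  · have hb : c w u x = u := by
      rw [p312 c hsym w u x]
      conv_lhs => rw [hd, p132 c hsym x y w]
      rw [h3pc x w y, ← p132 c hsym x y w, ← hd]
    have claim : c w u ρ = u → w = u := by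
      intro h
      rcases h4pc w x ρ u with h2 | h2 | h2
      · rw [hwx, p132 c hsym w x u, hb] at h2
        exact h2
      · rw [hwx, p132 c hsym w ρ u, h] at h2
        exact h2
      · rw [hwx, p132 c hsym x ρ u, p213 c hsym x u ρ, hux] at h2
        exact h2
    rcases h4pc w u ρ x with h | h | h
    · rw [hb] at h
      rw [h, (claim h).symm]
    · rw [p132 c hsym w ρ x, hwx] at h
      exact h
    · rw [p132 c hsym u ρ x, hux] at h
      rw [h, (claim h).symm]
  · rw [hd, m1 c hsym h2pc]

end AlgTreeAux

/-- Distinguishing a root `ρ` in an algebraic tree `(T,c)` and setting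
`c_∧(x,y) := c x y ρ` yields a rooted algebraic tree with root `ρ`. -/
theorem algebraic_tree_to_rooted {T : Type*} (c : T → T → T → T)
    (hsym : ∀ x y z : T, c x y z = c y x z ∧ c x y z = c x z y)
    (h2pc : ∀ x y : T, c x y y = y)
    (h3pc : ∀ x y z : T, c x y (c x y z) = c x y z)
    (h4pc : ∀ x1 x2 x3 x4 : T,
      c x1 x2 x3 = c x1 x2 x4 ∨ c x1 x2 x3 = c x1 x3 x4 ∨ c x1 x2 x3 = c x2 x3 x4)
    (ρ : T) :
    (∀ x y : T, c x y ρ = c y x ρ) ∧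
    (∀ x : T, c x x ρ = x) ∧
    (∀ x y z : T, c x (c y z ρ) ρ = c (c x y ρ) z ρ) ∧
    (∀ x y z : T,
      (c x y ρ = c x z ρ ∨ c x y ρ = c y z ρ ∨ c x z ρ = c y z ρ) ∧
      (c x y ρ = c x z ρ → c x y ρ = c (c x y ρ) (c y z ρ) ρ)) ∧
    (∀ x : T, c ρ x ρ = ρ) := by
  open AlgTreeAux in
  refine ⟨fun x y => p213 c hsym x y ρ, fun x => m1 c hsym h2pc ρ x, ?_, ?_, ?_⟩
  · -- associativity
    intro x y z
    have hpx : c (c x (c y z ρ) ρ) x ρ = c x (c y z ρ) ρ :=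
      lle_left c hsym h3pc ρ x (c y z ρ)
    have hpd : c (c x (c y z ρ) ρ) (c y z ρ) ρ = c x (c y z ρ) ρ :=
      lle_right c hsym h3pc ρ x (c y z ρ)
    have hdy : c (c y z ρ) y ρ = c y z ρ := lle_left c hsym h3pc ρ y z
    have hdz : c (c y z ρ) z ρ = c y z ρ := lle_right c hsym h3pc ρ y z
    have hpy := ltrans c hsym h3pc h4pc ρ hpd hdy
    have hpz := ltrans c hsym h3pc h4pc ρ hpd hdz
    have hqe : c (c (c x y ρ) z ρ) (c x y ρ) ρ = c (c x y ρ) z ρ :=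
      lle_left c hsym h3pc ρ (c x y ρ) z
    have hqz : c (c (c x y ρ) z ρ) z ρ = c (c x y ρ) z ρ :=
      lle_right c hsym h3pc ρ (c x y ρ) z
    have hex : c (c x y ρ) x ρ = c x y ρ := lle_left c hsym h3pc ρ x y
    have hey : c (c x y ρ) y ρ = c x y ρ := lle_right c hsym h3pc ρ x y
    have hqx := ltrans c hsym h3pc h4pc ρ hqe hex
    have hqy := ltrans c hsym h3pc h4pc ρ hqe hey
    have hpe : c (c x (c y z ρ) ρ) (c x y ρ) ρ = c x (c y z ρ) ρ :=
      llb c hsym h2pc h3pc h4pc ρ hpx hpy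
    have hpq : c (c x (c y z ρ) ρ) (c (c x y ρ) z ρ) ρ = c x (c y z ρ) ρ :=
      llb c hsym h2pc h3pc h4pc ρ hpe hpz
    have hqd : c (c (c x y ρ) z ρ) (c y z ρ) ρ = c (c x y ρ) z ρ :=
      llb c hsym h2pc h3pc h4pc ρ hqy hqz
    have hqp : c (c (c x y ρ) z ρ) (c x (c y z ρ) ρ) ρ = c (c x y ρ) z ρ :=
      llb c hsym h2pc h3pc h4pc ρ hqx hqd
    rw [← hpq, p213 c hsym, hqp]
  · -- M3
    intro x y z
    constructor
    · rcases h4pc x y ρ z with h | h | h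
      · rcases h4pc x z ρ y with h2 | h2 | h2
        · left
          rw [h, h2, p132 c hsym x z y]
        · left
          rw [h2, p132 c hsym x ρ y]
        · right; right
          rw [h2, p132 c hsym z ρ y, p213 c hsym z y ρ]
      · left
        rw [h, p132 c hsym x ρ z]
      · right; left
        rw [h, p132 c hsym y ρ z]
    · intro hab
      have hay : c (c x y ρ) y ρ = c x y ρ := lle_right c hsym h3pc ρ x y
      have haz : c (c x y ρ) z ρ = c x y ρ := by
        rw [hab]; exact lle_right c hsym h3pc ρ x z
      exact (llb c hsym h2pc h3pc h4pc ρ hay haz).symm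
  · intro x
    rw [p213 c hsym ρ x ρ]
    exact h2pc x ρ
end

section
/- Let (T, c_∧) be a partially ordered algebraic tree with partial order x ≤ y iff x = c_∧(x,y). Define c(x,y,z) := max{c_∧(x,y), c_∧(x,z), c_∧(y,z)} (which exists by (M3)). Then (T,c) is an algebraic tree satisfying (2pc), (3pc), (4pc). -/
/-- A partially ordered algebraic tree `(T, c_∧)` induces an algebraic tree:
the map `c(x,y,z)` defined as the maximum (w.r.t. the order `x ≤ y ↔ x = c_∧ x y`)
of the three pairwise minima satisfies (2pc), (3pc) and (4pc). -/
theorem partially_ordered_tree_to_algebraic_tree {T : Type*} (cw : T → T → T)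
    (hsym : ∀ x y : T, cw x y = cw y x)
    (hM1 : ∀ x : T, cw x x = x)
    (hM2 : ∀ x y z : T, cw x (cw y z) = cw (cw x y) z)
    (hM3 : ∀ x y z : T,
      (cw x y = cw x z ∨ cw x y = cw y z ∨ cw x z = cw y z) ∧
      (cw x y = cw x z → cw x y = cw (cw x y) (cw y z))) :
    ∃ c : T → T → T → T,
      (∀ x y z : T,
        c x y z ∈ ({cw x y, cw x z, cw y z} : Set T) ∧
        cw x y = cw (cw x y) (c x y z) ∧
        cw x z = cw (cw x z) (c x y z) ∧
        cw y z = cw (cw y z) (c x y z)) ∧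
      (∀ x y z : T, c x y z = c y x z ∧ c x y z = c x z y) ∧
      (∀ x y : T, c x y y = y) ∧
      (∀ x y z : T, c x y (c x y z) = c x y z) ∧
      (∀ x1 x2 x3 x4 : T,
        c x1 x2 x3 = c x1 x2 x4 ∨ c x1 x2 x3 = c x1 x3 x4 ∨
          c x1 x2 x3 = c x2 x3 x4) := by
  classical
  -- basic order facts (u ≤ v is expressed as u = cw u v)
  have hrefl' : ∀ x : T, x = cw x x := fun x => (hM1 x).symm
  have hinfl : ∀ x y : T, cw x y = cw (cw x y) x := by
    intro x y
    have h : cw (cw x y) x = cw x y := by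
      rw [← hM2 x y x, hsym y x, hM2 x x y, hM1 x]
    exact h.symm
  have hinfr : ∀ x y : T, cw x y = cw (cw x y) y := by
    intro x y
    rw [← hM2 x y y, hM1 y]
  have htrans : ∀ x y z : T, x = cw x y → y = cw y z → x = cw x z := by
    intro x y z h1 h2
    calc x = cw x y := h1
      _ = cw x (cw y z) := by rw [← h2]
      _ = cw (cw x y) z := hM2 x y z
      _ = cw x z := by rw [← h1]
  have hanti : ∀ x y : T, x = cw x y → y = cw y x → x = y := by
    intro x y h1 h2
    exact h1.trans ((hsym x y).trans h2.symm)
  -- the three variants of the second half of (M3)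
  have hP : ∀ x y z : T, cw x y = cw x z → cw x y = cw (cw x y) (cw y z) :=
    fun x y z => (hM3 x y z).2
  have hQ : ∀ x y z : T, cw x y = cw y z → cw x y = cw (cw x y) (cw x z) := by
    intro x y z h
    have h' : cw y x = cw y z := by rw [hsym y x]; exact h
    have := (hM3 y x z).2 h'
    rw [hsym y x] at this
    exact this
  have hR : ∀ x y z : T, cw x z = cw y z → cw x z = cw (cw x z) (cw x y) := by
    intro x y z h
    have h' : cw z x = cw z y := by rw [hsym z x, hsym z y]; exact h
    have := (hM3 z x y).2 h'
    rw [hsym z x] at this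
    exact this
  -- the candidate map
  set c : T → T → T → T := fun x y z =>
    if cw x y = cw x z then cw y z else if cw x y = cw y z then cw x z else cw x y
    with hcdef
  -- c x y z is the maximum of the three pairwise minima
  have hmax : ∀ x y z : T,
      c x y z ∈ ({cw x y, cw x z, cw y z} : Set T) ∧
      cw x y = cw (cw x y) (c x y z) ∧
      cw x z = cw (cw x z) (c x y z) ∧
      cw y z = cw (cw y z) (c x y z) := by
    intro x y z
    by_cases h1 : cw x y = cw x z
    · have hc : c x y z = cw y z := by simp only [hcdef, if_pos h1]
      rw [hc]
      refine ⟨?_, hP x y z h1, ?_, hrefl' _⟩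
      · simp only [Set.mem_insert_iff, Set.mem_singleton_iff]; tauto
      · rw [← h1]; exact hP x y z h1
    · by_cases h2 : cw x y = cw y z
      · have hc : c x y z = cw x z := by simp only [hcdef, if_neg h1, if_pos h2]
        rw [hc]
        refine ⟨?_, hQ x y z h2, hrefl' _, ?_⟩
        · simp only [Set.mem_insert_iff, Set.mem_singleton_iff]; tauto
        · rw [← h2]; exact hQ x y z h2
      · have h3 : cw x z = cw y z := by
          rcases (hM3 x y z).1 with h | h | h
          · exact absurd h h1
          · exact absurd h h2
          · exact h
        have hc : c x y z = cw x y := by simp only [hcdef, if_neg h1, if_neg h2]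
        rw [hc]
        refine ⟨?_, hrefl' _, hR x y z h3, ?_⟩
        · simp only [Set.mem_insert_iff, Set.mem_singleton_iff]; tauto
        · rw [← h3]; exact hR x y z h3
  -- uniqueness of the maximum
  have huniq : ∀ x y z m : T, m ∈ ({cw x y, cw x z, cw y z} : Set T) →
      cw x y = cw (cw x y) m → cw x z = cw (cw x z) m → cw y z = cw (cw y z) m →
      c x y z = m := by
    intro x y z m hm h1 h2 h3
    obtain ⟨hmem, ha, hb, hd⟩ := hmax x y z
    simp only [Set.mem_insert_iff, Set.mem_singleton_iff] at hm hmem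
    have hcm : c x y z = cw (c x y z) m := by
      rcases hmem with h | h | h <;> rw [h] <;> assumption
    have hmc : m = cw m (c x y z) := by
      rcases hm with h | h | h <;> rw [h] <;> assumption
    exact hanti _ _ hcm hmc
  -- symmetry
  have hcomm : ∀ x y z : T, c x y z = c y x z ∧ c x y z = c x z y := by
    intro x y z
    obtain ⟨hmem, ha, hb, hd⟩ := hmax x y z
    simp only [Set.mem_insert_iff, Set.mem_singleton_iff] at hmem
    constructor
    · refine (huniq y x z (c x y z) ?_ ?_ hd hb).symm
      · simp only [Set.mem_insert_iff, Set.mem_singleton_iff]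
        rw [hsym y x]; tauto
      · rw [hsym y x]; exact ha
    · refine (huniq x z y (c x y z) ?_ hb ha ?_).symm
      · simp only [Set.mem_insert_iff, Set.mem_singleton_iff]
        rw [hsym z y]; tauto
      · rw [hsym z y]; exact hd
  -- (2pc)
  have h2pc : ∀ x y : T, c x y y = y := by
    intro x y
    refine huniq x y y y ?_ (hinfr x y) (hinfr x y) ?_
    · simp only [Set.mem_insert_iff, Set.mem_singleton_iff]
      right; right; exact (hM1 y).symm
    · rw [hM1 y]; exact hrefl' y
  -- (3pc)
  have h3pc : ∀ x y z : T, c x y (c x y z) = c x y z := by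
    intro x y z
    obtain ⟨hmem, ha, hb, hd⟩ := hmax x y z
    simp only [Set.mem_insert_iff, Set.mem_singleton_iff] at hmem
    have hcase : c x y z = cw (c x y z) x ∨ c x y z = cw (c x y z) y := by
      rcases hmem with h | h | h
      · left; rw [h]; exact hinfl x y
      · left; rw [h]; exact hinfl x z
      · right; rw [h]; exact hinfl y z
    rcases hcase with h | h
    · refine huniq x y (c x y z) (c x y z) ?_ ha (hinfr x _) (hinfr y _)
      simp only [Set.mem_insert_iff, Set.mem_singleton_iff]
      right; left; exact h.trans (hsym _ _)
    · refine huniq x y (c x y z) (c x y z) ?_ ha (hinfr x _) (hinfr y _)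
      simp only [Set.mem_insert_iff, Set.mem_singleton_iff]
      right; right; exact h.trans (hsym _ _)
  -- key lemma for (4pc): if c12 = c14 and c12 ≠ c24 (with x3 below c12), then c34 ≤ c12
  have key34 : ∀ x1 x2 x3 x4 : T,
      cw x1 x3 = cw (cw x1 x3) (cw x1 x2) →
      cw x2 x3 = cw (cw x2 x3) (cw x1 x2) →
      cw x1 x2 = cw x1 x4 →
      cw x1 x2 ≠ cw x2 x4 →
      cw x3 x4 = cw (cw x3 x4) (cw x1 x2) := by
    intro x1 x2 x3 x4 h13 h23 h14 hne
    rcases (hM3 x1 x3 x4).1 with h | h | h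
    · -- hard case: cw x1 x3 = cw x1 x4
      have h1224 : cw x1 x2 = cw (cw x1 x2) (cw x2 x4) := (hM3 x1 x2 x4).2 h14
      rcases (hM3 x2 x3 x4).1 with g | g | g
      · exfalso
        apply hne
        have g' : cw x2 x4 = cw (cw x2 x4) (cw x1 x2) := by rw [← g]; exact h23
        exact hanti _ _ h1224 g'
      · rw [← g]; exact h23
      · exfalso
        apply hne
        have g' : cw x4 x2 = cw x4 x3 := by rw [hsym x4 x2, hsym x4 x3]; exact g
        have h2423 : cw x4 x2 = cw (cw x4 x2) (cw x2 x3) := (hM3 x4 x2 x3).2 g'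
        rw [hsym x4 x2] at h2423
        have : cw x2 x4 = cw (cw x2 x4) (cw x1 x2) := htrans _ _ _ h2423 h23
        exact hanti _ _ h1224 this
    · rw [← h]; exact h13
    · rw [← h, ← h14]; exact hrefl' _
  -- key lemma: (4pc) in the case where c x1 x2 x3 = cw x1 x2
  have key : ∀ x1 x2 x3 x4 : T, c x1 x2 x3 = cw x1 x2 →
      (c x1 x2 x3 = c x1 x2 x4 ∨ c x1 x2 x3 = c x1 x3 x4 ∨
        c x1 x2 x3 = c x2 x3 x4) := by
    intro x1 x2 x3 x4 hm
    obtain ⟨_, _, hb, hd⟩ := hmax x1 x2 x3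
    rw [hm] at hb hd
    rw [hm]
    by_cases hA : cw x1 x2 = cw x1 x4
    · by_cases hB : cw x1 x2 = cw x2 x4
      · left
        refine (huniq x1 x2 x4 (cw x1 x2) ?_ (hrefl' _) ?_ ?_).symm
        · simp
        · rw [← hA]; exact hrefl' _
        · rw [← hB]; exact hrefl' _
      · right; left
        have h34 := key34 x1 x2 x3 x4 hb hd hA hB
        refine (huniq x1 x3 x4 (cw x1 x2) ?_ hb ?_ h34).symm
        · simp only [Set.mem_insert_iff, Set.mem_singleton_iff]
          right; left; exact hA
        · rw [← hA]; exact hrefl' _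
    · by_cases hB : cw x1 x2 = cw x2 x4
      · right; right
        have hb' : cw x2 x3 = cw (cw x2 x3) (cw x2 x1) := by rw [hsym x2 x1]; exact hd
        have hd' : cw x1 x3 = cw (cw x1 x3) (cw x2 x1) := by rw [hsym x2 x1]; exact hb
        have hA' : cw x2 x1 = cw x2 x4 := by rw [hsym x2 x1]; exact hB
        have hB' : cw x2 x1 ≠ cw x1 x4 := by rw [hsym x2 x1]; exact hA
        have h34 := key34 x2 x1 x3 x4 hb' hd' hA' hB'
        rw [hsym x2 x1] at h34
        refine (huniq x2 x3 x4 (cw x1 x2) ?_ hd ?_ h34).symm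
        · simp only [Set.mem_insert_iff, Set.mem_singleton_iff]
          right; left; exact hB
        · rw [← hB]; exact hrefl' _
      · left
        rcases (hM3 x1 x2 x4).1 with h | h | h
        · exact absurd h hA
        · exact absurd h hB
        · have h14 : cw x1 x4 = cw (cw x1 x4) (cw x1 x2) := hR x1 x2 x4 h
          refine (huniq x1 x2 x4 (cw x1 x2) ?_ (hrefl' _) h14 ?_).symm
          · simp
          · rw [← h]; exact h14
  -- (4pc)
  have h4pc : ∀ x1 x2 x3 x4 : T,
      c x1 x2 x3 = c x1 x2 x4 ∨ c x1 x2 x3 = c x1 x3 x4 ∨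
        c x1 x2 x3 = c x2 x3 x4 := by
    intro x1 x2 x3 x4
    obtain ⟨hmem, _, _, _⟩ := hmax x1 x2 x3
    simp only [Set.mem_insert_iff, Set.mem_singleton_iff] at hmem
    rcases hmem with h | h | h
    · exact key x1 x2 x3 x4 h
    · have e : c x1 x3 x2 = c x1 x2 x3 := ((hcomm x1 x2 x3).2).symm
      have h' : c x1 x3 x2 = cw x1 x3 := e.trans h
      rcases key x1 x3 x2 x4 h' with g | g | g
      · right; left; rw [← e]; exact g
      · left; rw [← e]; exact g
      · right; right; rw [← e, g, (hcomm x2 x3 x4).1]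
    · have e : c x2 x3 x1 = c x1 x2 x3 := by
        rw [(hcomm x1 x2 x3).1, (hcomm x2 x1 x3).2]
      have h' : c x2 x3 x1 = cw x2 x3 := e.trans h
      rcases key x2 x3 x1 x4 h' with g | g | g
      · right; right; rw [← e]; exact g
      · left; rw [← e, g, (hcomm x1 x2 x4).1]
      · right; left; rw [← e, g, (hcomm x1 x3 x4).1]
  exact ⟨c, hmax, hcomm, h2pc, h3pc, h4pc⟩
end

section
/- Let two finite measures ξ, ξ' on an algebraic tree (T,c), each finite on intervals, induce pseudometrics r_ξ, r_{ξ'} as r_ξ(x,y) := ξ([x,y]) − ½ξ({x}) − ½ξ({y}). If ξ([x,y]) > 0 whenever x ≠ y, then r_ξ is a metric on T. -/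
open MeasureTheory



section TreeAux

variable {T : Type*} {c : T → T → T → T}

private lemma lemA (hsym : ∀ x y z : T, c x y z = c y x z ∧ c x y z = c x z y)
    (h2pc : ∀ x y : T, c x y y = y)
    (h4pc : ∀ x1 x2 x3 x4 : T,
      c x1 x2 x3 = c x1 x2 x4 ∨ c x1 x2 x3 = c x1 x3 x4 ∨ c x1 x2 x3 = c x2 x3 x4)
    (x z : T) : c x x z = x := by
  rcases h4pc x x z x with h | h | h
  · rw [h, h2pc]
  · rw [h, (hsym x z x).1, h2pc]
  · rw [h, (hsym x z x).1, h2pc]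

-- the median lies in [x,z]
private lemma med_xz (hsym : ∀ x y z : T, c x y z = c y x z ∧ c x y z = c x z y)
    (h3pc : ∀ x y z : T, c x y (c x y z) = c x y z)
    (x y z : T) : c x z (c x y z) = c x y z := by
  rw [(hsym x y z).2]; exact h3pc x z y

-- the median lies in [y,z]
private lemma med_yz (hsym : ∀ x y z : T, c x y z = c y x z ∧ c x y z = c x z y)
    (h3pc : ∀ x y z : T, c x y (c x y z) = c x y z)
    (x y z : T) : c y z (c x y z) = c x y z := by
  have e : c x y z = c y z x := by rw [(hsym x y z).1, (hsym y x z).2]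
  rw [e]; exact h3pc y z x

-- betweenness antisymmetry
private lemma lemC (hsym : ∀ x y z : T, c x y z = c y x z ∧ c x y z = c x z y)
    (h2pc : ∀ x y : T, c x y y = y)
    (h4pc : ∀ x1 x2 x3 x4 : T,
      c x1 x2 x3 = c x1 x2 x4 ∨ c x1 x2 x3 = c x1 x3 x4 ∨ c x1 x2 x3 = c x2 x3 x4)
    (x a b : T) (hab : c x a b = b) (hba : c x b a = a) : a = b := by
  rcases h4pc x a b a with h | h | h
  · rw [hab, h2pc] at h; exact h.symm
  · rw [hab, hba] at h; exact h.symm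
  · rw [hab, (hsym a b a).2, lemA hsym h2pc h4pc] at h; exact h.symm

-- interval transitivity: v ∈ [x,y], w ∈ [x,v] ⟹ w ∈ [x,y]
private lemma lemB (hsym : ∀ x y z : T, c x y z = c y x z ∧ c x y z = c x z y)
    (h2pc : ∀ x y : T, c x y y = y)
    (h3pc : ∀ x y z : T, c x y (c x y z) = c x y z)
    (h4pc : ∀ x1 x2 x3 x4 : T,
      c x1 x2 x3 = c x1 x2 x4 ∨ c x1 x2 x3 = c x1 x3 x4 ∨ c x1 x2 x3 = c x2 x3 x4)
    (x y v w : T) (hv : c x y v = v) (hw : c x v w = w) : c x y w = w := by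
  rcases h4pc x y w v with h | h | h
  · -- c x y w = v
    rw [hv] at h
    have h1 : c x w (c x y w) = c x y w := med_xz hsym h3pc x y w
    rw [h] at h1
    have h2 : w = v := lemC hsym h2pc h4pc x w v h1 hw
    rw [h, ← h2]
  · rw [(hsym x w v).2, hw] at h; exact h
  · -- c x y w = c y w v
    have ht1 : c x w (c x y w) = c x y w := med_xz hsym h3pc x y w
    have ht2 : c v w (c x y w) = c x y w := by
      have e : c y w v = c v w y := by
        rw [(hsym y w v).1, (hsym w y v).2, (hsym w v y).1]
      rw [h, e]; exact h3pc v w y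
    rcases h4pc x v w (c x y w) with h2 | h2 | h2
    · -- w = c x v (c x y w)
      rw [hw] at h2
      have h3 : c x (c x y w) (c x v (c x y w)) = c x v (c x y w) :=
        med_xz hsym h3pc x v (c x y w)
      rw [← h2] at h3
      exact (lemC hsym h2pc h4pc x (c x y w) w h3 ht1).symm ▸ rfl
    · rw [hw, ht1] at h2; exact h2.symm
    · rw [hw, ht2] at h2; exact h2.symm

-- splitting: w ∈ [x,z] ⟹ w ∈ [x,m] ∨ w ∈ [m,z] with m = c x y z
private lemma lemSplit (hsym : ∀ x y z : T, c x y z = c y x z ∧ c x y z = c x z y)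
    (h2pc : ∀ x y : T, c x y y = y)
    (h3pc : ∀ x y z : T, c x y (c x y z) = c x y z)
    (h4pc : ∀ x1 x2 x3 x4 : T,
      c x1 x2 x3 = c x1 x2 x4 ∨ c x1 x2 x3 = c x1 x3 x4 ∨ c x1 x2 x3 = c x2 x3 x4)
    (x y z w : T) (hw : c x z w = w) :
    c x (c x y z) w = w ∨ c (c x y z) z w = w := by
  rcases h4pc x z w (c x y z) with h | h | h
  · left
    rw [med_xz hsym h3pc x y z] at h
    rw [hw] at h
    rw [h, h2pc]
  · left
    rw [(hsym x (c x y z) w).2, ← h, hw]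
  · right
    rw [(hsym (c x y z) z w).1, (hsym z (c x y z) w).2, ← h, hw]

end TreeAux

/-- If the measure `ξ` on an algebraic tree is finite on intervals and gives
positive mass to every interval `[x,y]` with `x ≠ y`, then the pseudometric
`r_ξ` is a metric. -/
theorem rxi_is_metric {T : Type*} (c : T → T → T → T)
    (hsym : ∀ x y z : T, c x y z = c y x z ∧ c x y z = c x z y)
    (h2pc : ∀ x y : T, c x y y = y)
    (h3pc : ∀ x y z : T, c x y (c x y z) = c x y z)
    (h4pc : ∀ x1 x2 x3 x4 : T,
      c x1 x2 x3 = c x1 x2 x4 ∨ c x1 x2 x3 = c x1 x3 x4 ∨ c x1 x2 x3 = c x2 x3 x4)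
    [m : MeasurableSpace T]
    (hm : m = @borel T (TopologicalSpace.generateFrom
      {S : Set T | ∃ x y : T, x ≠ y ∧ S = {z : T | z ≠ x ∧ c x z y ≠ x}}))
    (ξ : Measure T)
    (hfin : ∀ x y : T, ξ {z : T | c x y z = z} < ⊤)
    (hpos : ∀ x y : T, x ≠ y → 0 < ξ {z : T | c x y z = z}) :
    (∀ x y : T,
      (ξ {z : T | c x y z = z}).toReal - (ξ {x}).toReal / 2 - (ξ {y}).toReal / 2 = 0
        ↔ x = y) ∧
    (∀ x y : T,
      (ξ {z : T | c x y z = z}).toReal - (ξ {x}).toReal / 2 - (ξ {y}).toReal / 2 =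
      (ξ {z : T | c y x z = z}).toReal - (ξ {y}).toReal / 2 - (ξ {x}).toReal / 2) ∧
    (∀ x y z : T,
      (ξ {w : T | c x z w = w}).toReal - (ξ {x}).toReal / 2 - (ξ {z}).toReal / 2 ≤
      ((ξ {w : T | c x y w = w}).toReal - (ξ {x}).toReal / 2 - (ξ {y}).toReal / 2) +
      ((ξ {w : T | c y z w = w}).toReal - (ξ {y}).toReal / 2 - (ξ {z}).toReal / 2)) := by
  -- topology and Borel structure
  letI τ : TopologicalSpace T := TopologicalSpace.generateFrom
      {S : Set T | ∃ x y : T, x ≠ y ∧ S = {z : T | z ≠ x ∧ c x z y ≠ x}}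
  haveI : BorelSpace T := ⟨hm⟩
  -- singletons are measurable
  have hsing : ∀ y : T, MeasurableSet ({y} : Set T) := by
    intro y
    have hopen : IsOpen (({y} : Set T)ᶜ) := by
      have he : (({y} : Set T)ᶜ) = ⋃ z ∈ {z : T | z ≠ y}, {w : T | w ≠ y ∧ c y w z ≠ y} := by
        ext w
        simp only [Set.mem_compl_iff, Set.mem_singleton_iff, Set.mem_iUnion,
          Set.mem_setOf_eq, exists_prop]
        constructor
        · intro hw
          exact ⟨w, hw, hw, by rw [h2pc y w]; exact hw⟩
        · rintro ⟨z, _, hw, _⟩; exact hw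
      rw [he]
      exact isOpen_biUnion fun z hz =>
        TopologicalSpace.isOpen_generateFrom_of_mem ⟨y, z, Ne.symm hz, rfl⟩
    simpa using hopen.isClosed_compl.measurableSet
  -- basic membership facts
  have memx : ∀ x y : T, c x y x = x := fun x y => by
    rw [(hsym x y x).2]; exact lemA hsym h2pc h4pc x y
  have Ixx : ∀ x : T, {z : T | c x x z = z} = {x} := by
    intro x
    ext z
    simp only [Set.mem_setOf_eq, Set.mem_singleton_iff]
    rw [lemA hsym h2pc h4pc x z]
    exact eq_comm
  have hsfin : ∀ x : T, ξ ({x} : Set T) ≠ ⊤ := fun x => by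
    rw [← Ixx x]; exact (hfin x x).ne
  have hIfin : ∀ x y : T, ξ {z : T | c x y z = z} ≠ ⊤ := fun x y => (hfin x y).ne
  refine ⟨?_, ?_, ?_⟩
  · -- point one: = 0 ↔ x = y
    intro x y
    constructor
    · intro h
      by_contra hxy
      -- ξ {x} + ξ {y} ≤ ξ [x,y]
      have hsub : ({x} : Set T) ∪ {y} ⊆ {z : T | c x y z = z} := by
        intro w hw
        have hw' : w = x ∨ w = y := by simpa [or_comm] using hw
        rcases hw' with h | h
        · rw [Set.mem_setOf_eq, h]; exact memx x y
        · rw [Set.mem_setOf_eq, h]; exact h2pc x y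
      have hdisj : Disjoint ({x} : Set T) {y} := by
        simp [Set.disjoint_singleton, hxy]
      have hle : ξ {x} + ξ {y} ≤ ξ {z : T | c x y z = z} := by
        rw [← measure_union hdisj (hsing y)]
        exact measure_mono hsub
      have hle' : (ξ {x}).toReal + (ξ {y}).toReal ≤ (ξ {z : T | c x y z = z}).toReal := by
        rw [← ENNReal.toReal_add (hsfin x) (hsfin y)]
        exact ENNReal.toReal_mono (hIfin x y) hle
      have hApos : 0 < (ξ {z : T | c x y z = z}).toReal :=
        ENNReal.toReal_pos (hpos x y hxy).ne' (hIfin x y)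
      linarith
    · rintro rfl
      rw [Ixx x]
      ring
  · -- symmetry
    intro x y
    have he : {z : T | c x y z = z} = {z : T | c y x z = z} := by
      ext z; simp only [Set.mem_setOf_eq]; rw [(hsym x y z).1]
    rw [he]; ring
  · -- triangle inequality
    intro x y z
    set m' := c x y z with hm'
    -- key inequality in ℝ≥0∞
    have key : ξ {w : T | c x z w = w} + ξ {y}
        ≤ ξ {w : T | c x y w = w} + ξ {w : T | c y z w = w} := by
      have h1 : ξ {w : T | c x z w = w}
          ≤ ξ {w : T | c x m' w = w} + ξ ({w : T | c m' z w = w} \ {m'}) := by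
        refine le_trans (measure_mono ?_) (measure_union_le _ _)
        intro w hw
        rcases lemSplit hsym h2pc h3pc h4pc x y z w hw with h | h
        · exact Or.inl h
        · by_cases hwm : w = m'
          · exact Or.inl (by rw [Set.mem_setOf_eq, hwm]; exact h2pc x m')
          · exact Or.inr ⟨h, hwm⟩
      have h2 : ξ {w : T | c x m' w = w} ≤ ξ {w : T | c x y w = w} := by
        refine measure_mono fun w hw => ?_
        exact lemB hsym h2pc h3pc h4pc x y m' w (h3pc x y z) hw
      have h3 : ξ ({w : T | c m' z w = w} \ {m'}) + ξ {y} ≤ ξ {w : T | c y z w = w} := by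
        have hyz : ξ {w : T | c y z w = w}
            = ξ ({w : T | c y z w = w} \ {y}) + ξ ({w : T | c y z w = w} ∩ {y}) := by
          rw [add_comm, measure_inter_add_diff _ (hsing y)]
        have hy : {w : T | c y z w = w} ∩ {y} = {y} := by
          refine Set.inter_eq_self_of_subset_right ?_
          rintro w rfl
          exact memx w z
        have hmono : {w : T | c m' z w = w} \ {m'} ⊆ {w : T | c y z w = w} \ {y} := by
          rintro w ⟨hw, hwm⟩
          have hmyz : c z y m' = m' := by
            rw [(hsym z y m').1]; exact med_yz hsym h3pc x y z
          constructor
          · -- w ∈ [y,z]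
            rw [Set.mem_setOf_eq, (hsym y z w).1]
            refine lemB hsym h2pc h3pc h4pc z y m' w hmyz ?_
            rw [(hsym z m' w).1]; exact hw
          · -- w ≠ y
            intro hwy
            subst hwy
            apply hwm
            have hzw : c z w m' = m' := hmyz
            have hzm : c z m' w = w := by rw [(hsym z m' w).1]; exact hw
            exact lemC hsym h2pc h4pc z w m' hzw hzm
        rw [hyz, hy]
        exact add_le_add (measure_mono hmono) le_rfl
      calc ξ {w : T | c x z w = w} + ξ {y}
          ≤ (ξ {w : T | c x m' w = w} + ξ ({w : T | c m' z w = w} \ {m'})) + ξ {y} :=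
            add_le_add h1 le_rfl
        _ = ξ {w : T | c x m' w = w} + (ξ ({w : T | c m' z w = w} \ {m'}) + ξ {y}) := by
            ring
        _ ≤ ξ {w : T | c x y w = w} + ξ {w : T | c y z w = w} := add_le_add h2 h3
    -- convert to real
    have keyR : (ξ {w : T | c x z w = w}).toReal + (ξ {y}).toReal
        ≤ (ξ {w : T | c x y w = w}).toReal + (ξ {w : T | c y z w = w}).toReal := by
      rw [← ENNReal.toReal_add (hIfin x z) (hsfin y),
        ← ENNReal.toReal_add (hIfin x y) (hIfin y z)]
      exact ENNReal.toReal_mono (by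
        exact ENNReal.add_ne_top.mpr ⟨hIfin x y, hIfin y z⟩) key
    linarith
end

section
/- Let I be the collection of all intervals [x,y] of an algebraic tree (T,c). Then the Vapnik–Chervonenkis dimension of I is at most 2: no 3-element subset of T is shattered by I. -/
section TreeAux

variable {T : Type*} (c : T → T → T → T)
variable (hsym : ∀ x y z : T, c x y z = c y x z ∧ c x y z = c x z y)
variable (h3pc : ∀ x y z : T, c x y (c x y z) = c x y z)
variable (h4pc : ∀ x1 x2 x3 x4 : T,
      c x1 x2 x3 = c x1 x2 x4 ∨ c x1 x2 x3 = c x1 x3 x4 ∨ c x1 x2 x3 = c x2 x3 x4)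

include hsym

private lemma tree_swap12 (x y z : T) : c x y z = c y x z := (hsym x y z).1
private lemma tree_swap23 (x y z : T) : c x y z = c x z y := (hsym x y z).2
private lemma tree_rot (x y z : T) : c x y z = c y z x :=
  ((hsym x y z).1).trans ((hsym y x z).2)

include h3pc

/-- If `v = c a b u` then `v ∈ [a,u]`. -/
private lemma tree_trick (a b u v : T) (h : c a b u = v) : c a u v = v := by
  rw [← h, (hsym a b u).2]
  exact h3pc a u b

include h4pc

/-- If `u, v ∈ [a,b]` then `c a u v ∈ {u, v}`. -/
private lemma tree_lemC (a b u v : T) (hu : c a b u = u) (hv : c a b v = v) :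
    c a u v = u ∨ c a u v = v := by
  rcases h4pc a u v b with h | h | h
  · left; rw [h, ← (hsym a b u).2, hu]
  · right; rw [h, ← (hsym a b v).2, hv]
  · -- c a u v = c u v b
    left
    have htau : c a u (c a u v) = c a u v := h3pc a u v
    have htbu : c b u (c a u v) = c a u v := by
      have e : c a u v = c b u v :=
        h.trans ((tree_rot c hsym u v b).trans (((hsym v b u).1).trans (hsym b v u).2))
      rw [e]; exact h3pc b u v
    rcases h4pc a b u (c a u v) with g | g | g
    · have g' : c a b (c a u v) = u := g.symm.trans hu
      have h1 : c a (c a u v) u = u := tree_trick c hsym h3pc a b (c a u v) u g'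
      have h2 : c a (c a u v) u = c a u v := ((hsym a (c a u v) u).2).trans htau
      exact (h2.symm.trans h1)
    · exact ((hu.symm.trans g).trans htau).symm
    · exact ((hu.symm.trans g).trans htbu).symm

/-- If `x, y, z ∈ [a,b]` then the median of `x,y,z` is one of them. -/
private lemma tree_lemB (a b x y z : T) (hx : c a b x = x) (hy : c a b y = y)
    (hz : c a b z = z) : c x y z = x ∨ c x y z = y ∨ c x y z = z := by
  rcases h4pc x y z a with h | h | h
  · have h' : c x y z = c a x y := by rw [h, tree_rot c hsym x y a, (hsym y a x).1, (hsym a y x).2]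
    rcases tree_lemC c hsym h3pc h4pc a b x y hx hy with g | g
    · left; rw [h', g]
    · right; left; rw [h', g]
  · have h' : c x y z = c a x z := by rw [h, tree_rot c hsym x z a, (hsym z a x).1, (hsym a z x).2]
    rcases tree_lemC c hsym h3pc h4pc a b x z hx hz with g | g
    · left; rw [h', g]
    · right; right; rw [h', g]
  · have h' : c x y z = c a y z := by rw [h, tree_rot c hsym y z a, (hsym z a y).1, (hsym a z y).2]
    rcases tree_lemC c hsym h3pc h4pc a b y z hy hz with g | g
    · right; left; rw [h', g]
    · right; right; rw [h', g]

/-- Case of convexity with both betweenness witnesses at the same point. -/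
private lemma tree_sameCase (p q x y : T) (hx : c p q x = x)
    (h1 : c x p y = y) (h2 : c x q y = y) (hxy : x ≠ y) : c p q y = y := by
  have e1 : c p y x = y := by
    rw [(hsym p y x).2, (hsym p x y).1]; exact h1
  have e2 : c q y x = y := by
    rw [(hsym q y x).2, (hsym q x y).1]; exact h2
  rcases h4pc p q y x with h | h | h
  · exfalso
    have h' : c p q y = x := by rw [h, hx]
    have h3 : c p y x = x := tree_trick c hsym h3pc p q y x h'
    exact hxy (by rw [← e1, h3])
  · rw [h, e1]
  · rw [h, e2]

/-- Mixed case of convexity. -/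
private lemma tree_mixedCase (p q x y z : T) (hx : c p q x = x) (hz : c p q z = z)
    (hy : c x z y = y) (h1 : c x p y = y) (h2 : c z q y = y)
    (hxy : x ≠ y) (hzy : z ≠ y) : c p q y = y := by
  have e1 : c p y x = y := by
    rw [(hsym p y x).2, (hsym p x y).1]; exact h1
  have e2 : c q y z = y := by
    rw [(hsym q y z).2, (hsym q z y).1]; exact h2
  rcases h4pc p q y x with h | h | h
  · exfalso
    have h' : c p q y = x := by rw [h, hx]
    have h3 : c p y x = x := tree_trick c hsym h3pc p q y x h'
    exact hxy (by rw [← e1, h3])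
  · rw [h, e1]
  · -- c p q y = c q y x =: t
    rcases h4pc p q y z with h' | h' | h'
    · exfalso
      have h'' : c p q y = z := by rw [h', hz]
      have h3 : c q y z = z := by
        apply tree_trick c hsym h3pc q p y z
        rw [(hsym q p y).1]; exact h''
      exact hzy (by rw [← e2, h3])
    · -- c p q y = c q y x = c p y z
      have ht' : c q y x = c p y z := by rw [← h, h']
      have txy : c x y (c q y x) = c q y x := by
        have e : c q y x = c x y q := by
          rw [(hsym q y x).1, (hsym y q x).2, (hsym y x q).1]
        rw [e]; exact h3pc x y q
      have tzy : c z y (c q y x) = c q y x := by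
        have e : c q y x = c z y p := by
          rw [ht', (hsym p y z).1, (hsym y p z).2, (hsym y z p).1]
        rw [e]; exact h3pc z y p
      rcases h4pc x z y (c q y x) with g | g | g
      · have g' : c x z (c q y x) = y := g.symm.trans hy
        have h5 : c x (c q y x) y = y := tree_trick c hsym h3pc x z (c q y x) y g'
        have h6 : c x (c q y x) y = c q y x := ((hsym x (c q y x) y).2).trans txy
        rw [h, ← h6, h5]
      · have e : y = c q y x := (hy.symm.trans g).trans txy
        rw [h, ← e]
      · have e : y = c q y x := (hy.symm.trans g).trans tzy
        rw [h, ← e]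
    · rw [h', e2]

/-- Convexity of intervals: if `x, z ∈ [p,q]` and `y ∈ [x,z]` then `y ∈ [p,q]`. -/
private lemma tree_conv (p q x y z : T) (hx : c p q x = x) (hz : c p q z = z)
    (hy : c x z y = y) (hxy : x ≠ y) (hzy : z ≠ y) : c p q y = y := by
  have hy' : c z x y = y := by rw [(hsym z x y).1]; exact hy
  have Hp : c x p y = y ∨ c z p y = y := by
    rcases h4pc x z y p with h | h | h
    · left
      apply tree_trick c hsym h3pc x z p y
      rw [← h, hy]
    · left; exact ((hsym x p y).2).trans (h.symm.trans hy)
    · right; exact ((hsym z p y).2).trans (h.symm.trans hy)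
  have Hq : c x q y = y ∨ c z q y = y := by
    rcases h4pc x z y q with h | h | h
    · left
      apply tree_trick c hsym h3pc x z q y
      rw [← h, hy]
    · left; exact ((hsym x q y).2).trans (h.symm.trans hy)
    · right; exact ((hsym z q y).2).trans (h.symm.trans hy)
  rcases Hp with h1 | h1 <;> rcases Hq with h2 | h2
  · exact tree_sameCase c hsym h3pc h4pc p q x y hx h1 h2 hxy
  · exact tree_mixedCase c hsym h3pc h4pc p q x y z hx hz hy h1 h2 hxy hzy
  · -- y ∈ [z,p], y ∈ [x,q] : swap roles of x and z, and of p and q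
    have hx' : c q p x = x := by rw [(hsym q p x).1]; exact hx
    have hz' : c q p z = z := by rw [(hsym q p z).1]; exact hz
    have : c q p y = y :=
      tree_mixedCase c hsym h3pc h4pc q p x y z hx' hz' hy h2 h1 hxy hzy
    rw [(hsym p q y).1]; exact this
  · exact tree_sameCase c hsym h3pc h4pc p q z y hz h1 h2 hzy

end TreeAux

/-- The family of intervals of an algebraic tree has VC dimension at most 2:
no 3-element set is shattered by intervals. -/
theorem intervals_vc_dimension_le_two {T : Type*} (c : T → T → T → T)
    (hsym : ∀ x y z : T, c x y z = c y x z ∧ c x y z = c x z y)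
    (h2pc : ∀ x y : T, c x y y = y)
    (h3pc : ∀ x y z : T, c x y (c x y z) = c x y z)
    (h4pc : ∀ x1 x2 x3 x4 : T,
      c x1 x2 x3 = c x1 x2 x4 ∨ c x1 x2 x3 = c x1 x3 x4 ∨ c x1 x2 x3 = c x2 x3 x4) :
    ∀ x y z : T, x ≠ y → y ≠ z → x ≠ z →
      ¬ (∀ s : Set T, s ⊆ ({x, y, z} : Set T) →
        ∃ a b : T, ({x, y, z} : Set T) ∩ {w : T | c a b w = w} = s) := by
  intro x y z hxy hyz hxz hshat
  -- the full set is an interval trace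
  obtain ⟨a, b, hab⟩ := hshat ({x, y, z} : Set T) (subset_refl _)
  have hxmem : c a b x = x := by
    have h : x ∈ ({x, y, z} : Set T) := by simp
    rw [← hab] at h; exact h.2
  have hymem : c a b y = y := by
    have h : y ∈ ({x, y, z} : Set T) := by simp
    rw [← hab] at h; exact h.2
  have hzmem : c a b z = z := by
    have h : z ∈ ({x, y, z} : Set T) := by simp
    rw [← hab] at h; exact h.2
  rcases tree_lemB c hsym h3pc h4pc a b x y z hxmem hymem hzmem with hm | hm | hm
  · -- median is x : the pair {y,z} cannot be cut out
    obtain ⟨p, q, hpq⟩ := hshat ({y, z} : Set T) (by intro w hw; simp at hw; rcases hw with h | h <;> simp [h])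
    have hy' : c p q y = y := by
      have h : y ∈ ({y, z} : Set T) := by simp
      rw [← hpq] at h; exact h.2
    have hz' : c p q z = z := by
      have h : z ∈ ({y, z} : Set T) := by simp
      rw [← hpq] at h; exact h.2
    have hmid : c y z x = x := by rw [← tree_rot c hsym x y z, hm]
    have hx' : c p q x = x :=
      tree_conv c hsym h3pc h4pc p q y x z hy' hz' hmid (Ne.symm hxy) (Ne.symm hxz)
    have : x ∈ ({y, z} : Set T) := by
      rw [← hpq]; exact ⟨by simp, hx'⟩
    simp at this
    rcases this with h | h
    · exact hxy h
    · exact hxz h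
  · -- median is y : the pair {x, z} cannot be cut out
    obtain ⟨p, q, hpq⟩ := hshat ({x, z} : Set T) (by intro w hw; simp at hw; rcases hw with h | h <;> simp [h])
    have hx' : c p q x = x := by
      have h : x ∈ ({x, z} : Set T) := by simp
      rw [← hpq] at h; exact h.2
    have hz' : c p q z = z := by
      have h : z ∈ ({x, z} : Set T) := by simp
      rw [← hpq] at h; exact h.2
    have hmid : c x z y = y := by rw [← (hsym x y z).2, hm]
    have hy' : c p q y = y :=
      tree_conv c hsym h3pc h4pc p q x y z hx' hz' hmid hxy hyz.symm
    have : y ∈ ({x, z} : Set T) := by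
      rw [← hpq]; exact ⟨by simp, hy'⟩
    simp at this
    rcases this with h | h
    · exact hxy h.symm
    · exact hyz h
  · -- median is z : the pair {x, y} cannot be cut out
    obtain ⟨p, q, hpq⟩ := hshat ({x, y} : Set T) (by intro w hw; simp at hw; rcases hw with h | h <;> simp [h])
    have hx' : c p q x = x := by
      have h : x ∈ ({x, y} : Set T) := by simp
      rw [← hpq] at h; exact h.2
    have hy' : c p q y = y := by
      have h : y ∈ ({x, y} : Set T) := by simp
      rw [← hpq] at h; exact h.2
    have hz' : c p q z = z :=
      tree_conv c hsym h3pc h4pc p q x z y hx' hy' hm hxz hyz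
    have : z ∈ ({x, y} : Set T) := by
      rw [← hpq]; exact ⟨by simp, hz'⟩
    simp at this
    rcases this with h | h
    · exact hxz h.symm
    · exact hyz h.symm
end
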